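/- For every complex number s with Re(s) > 1, the series ∑_{n=1}^∞ P(n)/n^s converges absolutely and equals ζ(s)²/ζ(s+1). -/

import Mathlib

open Finset

/-- The proper Pillai function `P(n) = (1/n) ∑_{k=1}^n gcd(k,n)`. -/
noncomputable def pillai (n : ℕ) : ℝ :=
  (∑ k ∈ Finset.Icc 1 n, (Nat.gcd k n : ℝ)) / n

open scoped LSeries.notation

open LSeries Complex

lemma gcd_sum_eq {n : ℕ} (hn : n ≠ 0) :
    ∑ k ∈ Finset.Icc 1 n, Nat.gcd k n = ∑ d ∈ n.divisors, d * Nat.totient (n / d) := by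
  have hpos : 0 < n := Nat.pos_of_ne_zero hn
  have h1 : ∑ k ∈ Finset.Icc 1 n, Nat.gcd k n = ∑ k ∈ Finset.range n, Nat.gcd n k := by
    rw [show Finset.Icc 1 n = Finset.Ico 1 (n + 1) by rfl,
      Finset.sum_Ico_succ_top hpos, Finset.range_eq_Ico,
      Finset.sum_eq_sum_Ico_succ_bot hpos]
    simp only [Nat.gcd_comm, Nat.gcd_self, Nat.gcd_zero_right]
    ring
  rw [h1, ← Finset.sum_fiberwise_of_maps_to
    (g := fun k => Nat.gcd n k) (t := n.divisors)
    (fun k _ => Nat.mem_divisors.mpr ⟨Nat.gcd_dvd_left n k, hn⟩)]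
  refine Finset.sum_congr rfl fun d hd => ?_
  rw [Nat.totient_div_of_dvd (Nat.dvd_of_mem_divisors hd)]
  rw [Finset.sum_congr rfl (fun k hk => (Finset.mem_filter.mp hk).2), Finset.sum_const,
    smul_eq_mul, mul_comm]

lemma pillai_eq {n : ℕ} (hn : n ≠ 0) :
    pillai n = ∑ d ∈ n.divisors, (Nat.totient d : ℝ) / d := by
  rw [pillai]
  have : (∑ k ∈ Finset.Icc 1 n, (Nat.gcd k n : ℝ)) =
      ((∑ k ∈ Finset.Icc 1 n, Nat.gcd k n : ℕ) : ℝ) := by push_cast; ring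
  rw [this, gcd_sum_eq hn,
    ← Nat.sum_div_divisors n (fun d => (Nat.totient d : ℝ) / d)]
  push_cast
  rw [Finset.sum_div]
  refine Finset.sum_congr rfl fun d hd => ?_
  obtain ⟨hdvd, -⟩ := Nat.mem_divisors.mp hd
  obtain ⟨e, rfl⟩ := hdvd
  have hd0 : d ≠ 0 := by rintro rfl; simp at hn
  have he0 : e ≠ 0 := by rintro rfl; simp at hn
  rw [Nat.mul_div_cancel_left e (Nat.pos_of_ne_zero hd0)]
  push_cast
  rw [mul_div_mul_left _ _ (by exact_mod_cast hd0 : (d:ℝ) ≠ 0)]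

/-- `φ(n)/n` as a complex sequence. -/
noncomputable def phiDiv (n : ℕ) : ℂ := (Nat.totient n : ℂ) / n

lemma pillai_conv : (fun n : ℕ => (pillai n : ℂ)) = phiDiv ⍟ 1 := by
  funext n
  rcases eq_or_ne n 0 with rfl | hn
  · simp [pillai]
  · rw [convolution_def, pillai_eq hn]
    simp only [Pi.one_apply, mul_one]
    rw [Nat.sum_divisorsAntidiagonal (f := fun d _ => phiDiv d)]
    push_cast
    simp [phiDiv]

lemma term_phiDiv (s : ℂ) (n : ℕ) :
    term phiDiv s n = term (fun m => (Nat.totient m : ℂ)) (s + 1) n := by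
  rcases eq_or_ne n 0 with rfl | hn
  · simp [term_zero]
  · rw [term_of_ne_zero hn, term_of_ne_zero hn, phiDiv,
      cpow_add _ _ (by exact_mod_cast hn : (n : ℂ) ≠ 0), cpow_one, div_div]
    ring

lemma term_id (s : ℂ) (n : ℕ) :
    term (fun m => (m : ℂ)) (s + 1) n = term 1 s n := by
  rcases eq_or_ne n 0 with rfl | hn
  · simp [term_zero]
  · rw [term_of_ne_zero hn, term_of_ne_zero hn, Pi.one_apply,
      cpow_add _ _ (by exact_mod_cast hn : (n : ℂ) ≠ 0), cpow_one]
    have hn' : (n : ℂ) ≠ 0 := by exact_mod_cast hn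
    have h : ((n : ℂ)) ^ s ≠ 0 := by
      simp only [ne_eq, Complex.cpow_eq_zero_iff, not_and_or]
      exact Or.inl hn'
    rw [mul_comm (((n : ℂ)) ^ s) ((n : ℂ)), ← div_div, div_self hn']

lemma phi_conv_one : (fun m : ℕ => (Nat.totient m : ℂ)) ⍟ 1 = fun m : ℕ => (m : ℂ) := by
  funext n
  rcases eq_or_ne n 0 with rfl | hn
  · simp
  · rw [convolution_def]
    simp only [Pi.one_apply, mul_one]
    rw [Nat.sum_divisorsAntidiagonal (f := fun d _ => ((Nat.totient d : ℂ)))]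
    rw [show (n : ℂ) = ((n.divisors.sum Nat.totient : ℕ) : ℂ) by rw [Nat.sum_totient]]
    push_cast
    rfl

theorem pillai_dirichlet_series (s : ℂ) (hs : 1 < s.re) :
    Summable (fun n : ℕ => ‖(pillai (n + 1) : ℂ) / (n + 1 : ℂ) ^ s‖) ∧
    ∑' n : ℕ, (pillai (n + 1) : ℂ) / (n + 1 : ℂ) ^ s =
      riemannZeta s ^ 2 / riemannZeta (s + 1) := by
  have hs1 : 1 < (s + 1).re := by
    rw [Complex.add_re, Complex.one_re]; linarith
  -- Summability of constant-1 L-series at s and s+1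
  have h1s : LSeriesSummable 1 s := LSeriesSummable_one_iff.mpr hs
  have h1s1 : LSeriesSummable 1 (s + 1) := LSeriesSummable_one_iff.mpr hs1
  -- Summability of Id at s+1
  have hid : LSeriesSummable (fun m : ℕ => (m : ℂ)) (s + 1) := by
    unfold LSeriesSummable
    rw [show term (fun m : ℕ => (m : ℂ)) (s + 1) = term 1 s from funext (term_id s)]
    exact h1s
  -- Summability of totient at s+1
  have hphi : LSeriesSummable (fun m : ℕ => (Nat.totient m : ℂ)) (s + 1) := by
    refine Summable.of_norm_bounded
      (g := fun n => ‖term (fun m : ℕ => (m : ℂ)) (s + 1) n‖) hid.norm fun n => ?_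
    refine norm_term_le (s + 1) ?_
    simp only [Complex.norm_natCast]
    exact_mod_cast Nat.totient_le n
  -- Summability of phiDiv at s
  have hphiDiv : LSeriesSummable phiDiv s := by
    unfold LSeriesSummable
    rw [show term phiDiv s = term (fun m => (Nat.totient m : ℂ)) (s + 1) from
      funext (term_phiDiv s)]
    exact hphi
  -- Main summability
  have hmain : LSeriesSummable (fun n : ℕ => (pillai n : ℂ)) s := by
    rw [pillai_conv]
    exact hphiDiv.convolution h1s
  -- L-series values
  have hz1 : LSeries 1 s = riemannZeta s := LSeries_one_eq_riemannZeta hs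
  have hz2 : LSeries 1 (s + 1) = riemannZeta (s + 1) := LSeries_one_eq_riemannZeta hs1
  have hidval : LSeries (fun m : ℕ => (m : ℂ)) (s + 1) = riemannZeta s := by
    rw [LSeries, ← hz1, LSeries]
    exact tsum_congr (term_id s)
  have hphival : LSeries (fun m : ℕ => (Nat.totient m : ℂ)) (s + 1) * riemannZeta (s + 1)
      = riemannZeta s := by
    rw [← hz2, ← LSeries_convolution' hphi h1s1, phi_conv_one, hidval]
  have hzne : riemannZeta (s + 1) ≠ 0 := riemannZeta_ne_zero_of_one_lt_re hs1
  have hphiDivval : LSeries phiDiv s = riemannZeta s / riemannZeta (s + 1) := by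
    rw [LSeries, show (fun n => term phiDiv s n) = term (fun m => (Nat.totient m : ℂ)) (s + 1)
      from funext (term_phiDiv s), ← LSeries]
    field_simp [eq_div_iff hzne, hphival]
    exact hphival
  have hLmain : LSeries (fun n : ℕ => (pillai n : ℂ)) s =
      riemannZeta s ^ 2 / riemannZeta (s + 1) := by
    rw [pillai_conv, LSeries_convolution' hphiDiv h1s, hphiDivval, hz1]
    field_simp
  -- Translate to the statement
  have hterm : ∀ n : ℕ, term (fun n : ℕ => (pillai n : ℂ)) s (n + 1)
      = (pillai (n + 1) : ℂ) / (n + 1 : ℂ) ^ s := by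
    intro n
    have hc : ((n + 1 : ℕ) : ℂ) = (n : ℂ) + 1 := by push_cast; ring
    rw [term_of_ne_zero (Nat.succ_ne_zero n), hc]
  have hsum : Summable (fun n : ℕ => (pillai (n + 1) : ℂ) / (n + 1 : ℂ) ^ s) := by
    have := (summable_nat_add_iff 1).mpr hmain
    simpa only [hterm] using this
  constructor
  · exact hsum.norm
  · have := (Summable.tsum_eq_zero_add hmain).symm
    rw [term_zero, zero_add] at this
    calc ∑' n : ℕ, (pillai (n + 1) : ℂ) / (n + 1 : ℂ) ^ s
        = ∑' n : ℕ, term (fun n : ℕ => (pillai n : ℂ)) s (n + 1) :=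
          tsum_congr fun n => (hterm n).symm
      _ = LSeries (fun n : ℕ => (pillai n : ℂ)) s := this
      _ = riemannZeta s ^ 2 / riemannZeta (s + 1) := hLmain
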